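/- Let C be a category, X an object of C, f : X ⟶ X an endomorphism, and F_f : ℤ ⥤ C the associated diagram. Suppose F_f has a limit. Then the endomorphism of the limit of F_f induced (via the functoriality of limits) by the natural transformation F_f ⟶ F_f whose component at every index n is f is an isomorphism. -/

import Mathlib

open CategoryTheory CategoryTheory.Limits

/-- The diagram `ℤ ⥤ C` associated to an endomorphism `f : X ⟶ X`: every object is `X`
and the map `n ⟶ m` (for `n ≤ m`) is the `(m - n)`-fold composite of `f`. -/
def endoDiagram {C : Type*} [Category C] {X : C} (f : X ⟶ X) : ℤ ⥤ C where
  obj _ := X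
  map {n m} _ := (show CategoryTheory.End X from f) ^ (m - n).toNat
  map_id n := by
    simp only [sub_self, Int.toNat_zero, pow_zero]
    rfl
  map_comp {n m p} h₁ h₂ := by
    have hnm : n ≤ m := leOfHom h₁
    have hmp : m ≤ p := leOfHom h₂
    show (show CategoryTheory.End X from f) ^ (p - n).toNat =
      (show CategoryTheory.End X from f) ^ (p - m).toNat *
        (show CategoryTheory.End X from f) ^ (m - n).toNat
    rw [← pow_add]
    congr 1
    omega

/-- The natural transformation `endoDiagram f ⟶ endoDiagram f` whose component at every
index is `f` itself (naturality holds since `f` commutes with its own powers). -/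
def endoNatTrans {C : Type*} [Category C] {X : C} (f : X ⟶ X) :
    endoDiagram f ⟶ endoDiagram f where
  app _ := f
  naturality n m h := by
    show (show CategoryTheory.End X from f) * (show CategoryTheory.End X from f) ^ (m - n).toNat
      = (show CategoryTheory.End X from f) ^ (m - n).toNat * (show CategoryTheory.End X from f)
    rw [← pow_succ, ← pow_succ']

/-- If the diagram of an endomorphism `f : X ⟶ X` has a limit, then the endomorphism of
the limit induced by the natural transformation with all components `f` is an
isomorphism. -/
theorem isIso_limMap_endoNatTrans {C : Type*} [Category C] {X : C} (f : X ⟶ X)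
    [HasLimit (endoDiagram f)] :
    IsIso (limMap (endoNatTrans f)) := by
  have key : ∀ (n : ℤ) (k : ℕ), limit.π (endoDiagram f) n ≫
      (show CategoryTheory.End X from f) ^ k = limit.π (endoDiagram f) (n + k) := by
    intro n k
    have := limit.w (endoDiagram f) (homOfLE (by omega : n ≤ n + (k : ℤ)))
    simpa [endoDiagram, show (n + (k : ℤ) - n).toNat = k by omega] using this
  have key1 : ∀ n : ℤ, limit.π (endoDiagram f) n ≫ f = limit.π (endoDiagram f) (n + 1) := by
    intro n
    have := key n 1
    simpa using this
  let g : limit (endoDiagram f) ⟶ limit (endoDiagram f) :=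
    limit.lift (endoDiagram f)
      { pt := limit (endoDiagram f)
        π :=
          { app := fun n => limit.π (endoDiagram f) (n - 1)
            naturality := by
              intro n m h
              have hnm : n ≤ m := leOfHom h
              have := key (n - 1) (m - n).toNat
              simp only [Functor.const_obj_obj, Functor.const_obj_map, Category.id_comp]
              refine (Category.id_comp _).trans ?_
              show limit.π (endoDiagram f) (m - 1) =
                limit.π (endoDiagram f) (n - 1) ≫
                  (show CategoryTheory.End X from f) ^ (m - n).toNat
              rw [this]
              congr 1
              omega } }
  have hgπ : ∀ n : ℤ, g ≫ limit.π (endoDiagram f) n = limit.π (endoDiagram f) (n - 1) := by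
    intro n; simp [g]; rfl
  have hhπ : ∀ n : ℤ, limMap (endoNatTrans f) ≫ limit.π (endoDiagram f) n =
      limit.π (endoDiagram f) (n + 1) := by
    intro n
    rw [limMap_π]
    exact key1 n
  refine ⟨g, ?_, ?_⟩
  · apply limit.hom_ext
    intro n
    rw [Category.assoc, Category.id_comp, hgπ]
    exact (hhπ (n - 1)).trans (by congr 1; omega)
  · apply limit.hom_ext
    intro n
    rw [Category.assoc, Category.id_comp, hhπ]
    exact (hgπ (n + 1)).trans (by congr 1; omega)
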